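/- Let C1 and C2 be two disjoint closed circular discs on the unit sphere, each of radius less than π/2. Then there exists a great circle on the sphere that separates them: the two discs lie in the two distinct closed hemispheres determined by the great circle. -/

import Mathlib

open scoped RealInnerProductSpace
open Real

set_option maxHeartbeats 1000000

variable {E : Type*} [NormedAddCommGroup E] [InnerProductSpace ℝ E]

lemma gram_ineq (v X O : E) (hv : ‖v‖ = 1) (hX : ‖X‖ = 1) (hO : ‖O‖ = 1) :
    (⟪v, X⟫ - ⟪v, O⟫ * ⟪X, O⟫) ^ 2 ≤ (1 - ⟪v, O⟫ ^ 2) * (1 - ⟪X, O⟫ ^ 2) := by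
  have h := real_inner_mul_inner_self_le (v - ⟪v, O⟫ • O) (X - ⟪X, O⟫ • O)
  have hOO : ⟪O, O⟫ = 1 := by rw [real_inner_self_eq_norm_sq, hO]; norm_num
  have hvv : ⟪v, v⟫ = 1 := by rw [real_inner_self_eq_norm_sq, hv]; norm_num
  have hXX : ⟪X, X⟫ = 1 := by rw [real_inner_self_eq_norm_sq, hX]; norm_num
  simp only [inner_sub_left, inner_sub_right, real_inner_smul_left, real_inner_smul_right,
    hOO, hvv, hXX, real_inner_comm O v, real_inner_comm O X, real_inner_comm X v] at h
  rw [real_inner_comm X v, real_inner_comm O v, real_inner_comm O X]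
  nlinarith [h]

lemma key_arith {p q r s c : ℝ} (h : (r - p * q) ^ 2 ≤ (1 - p ^ 2) * (1 - q ^ 2))
    (hs : 0 < s) (hc : 0 < c) (hsc : s ^ 2 + c ^ 2 = 1)
    (hp : s ≤ p) (hq : c ≤ q) (hp1 : p ≤ 1) (hq1 : q ≤ 1) : 0 ≤ r := by
  have h1 : 1 - p ^ 2 ≤ q ^ 2 := by nlinarith
  have h2 : 1 - q ^ 2 ≤ p ^ 2 := by nlinarith
  have hq0 : 0 ≤ 1 - q ^ 2 := by nlinarith
  have hp0 : 0 ≤ 1 - p ^ 2 := by nlinarith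
  have h3 : (r - p * q) ^ 2 ≤ (p * q) ^ 2 := by nlinarith [mul_le_mul h1 h2 hq0 (sq_nonneg q)]
  nlinarith [mul_pos (hs.trans_le hp) (hc.trans_le hq)]

/-- If `v` is a unit vector with `⟪v,O⟫ ≥ sin r`, then the whole spherical disc of
center `O` and radius `r < π/2` lies in the half-space `⟪v,·⟫ ≥ 0`. -/
lemma half_lemma (v O : E) (r : ℝ) (hv : ‖v‖ = 1) (hO : ‖O‖ = 1)
    (hr0 : 0 < r) (hr2 : r < π / 2) (hvO : Real.sin r ≤ ⟪v, O⟫) :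
    ∀ X : E, ‖X‖ = 1 → Real.arccos ⟪X, O⟫ ≤ r → 0 ≤ ⟪v, X⟫ := by
  intro X hX harc
  have hXO1 : ⟪X, O⟫ ≤ 1 := by
    have := real_inner_le_norm X O; rwa [hX, hO, one_mul] at this
  have hXOm1 : -1 ≤ ⟪X, O⟫ := by
    have := abs_real_inner_le_norm X O; rw [hX, hO, one_mul] at this
    linarith [neg_abs_le (⟪X, O⟫)]
  have hvO1 : ⟪v, O⟫ ≤ 1 := by
    have := real_inner_le_norm v O; rwa [hv, hO, one_mul] at this
  have hXO : Real.cos r ≤ ⟪X, O⟫ := by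
    have h2 := Real.cos_le_cos_of_nonneg_of_le_pi (Real.arccos_nonneg _)
      (by linarith [Real.pi_pos]) harc
    rwa [Real.cos_arccos hXOm1 hXO1] at h2
  have hsinpos : 0 < Real.sin r := Real.sin_pos_of_pos_of_lt_pi hr0 (by linarith [Real.pi_pos])
  have hcospos : 0 < Real.cos r := Real.cos_pos_of_mem_Ioo ⟨by linarith, hr2⟩
  exact key_arith (gram_ineq v X O hv hX hO) hsinpos hcospos (Real.sin_sq_add_cos_sq r) hvO hXO hvO1 hXO1

lemma arccos_le_arccos' {x y : ℝ} (hxy : x ≤ y) : Real.arccos y ≤ Real.arccos x :=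
  sub_le_sub_left (Real.monotone_arcsin hxy) _

lemma aux_caseA {s1 c1 s2 c2 c : ℝ} (h1 : s1 ^ 2 + c1 ^ 2 = 1) (h2 : s2 ^ 2 + c2 ^ 2 = 1)
    (hs1 : 0 < s1) (hs2 : 0 < s2) (hc1 : 0 < c1) (hc2 : 0 < c2)
    (hA : -(c1 * c2 + s1 * s2) < c) (hcub : c + s1 * s2 ≤ c1 * c2) :
    c ^ 2 < 1 ∧ s1 ^ 2 + s2 ^ 2 + 2 * c * s1 * s2 ≤ 1 - c ^ 2 := by
  have habs : (c + s1 * s2) ^ 2 ≤ (c1 * c2) ^ 2 := by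
    nlinarith [mul_pos hc1 hc2]
  constructor
  · nlinarith [sq_nonneg (c1 * s2 - s1 * c2), mul_pos hs1 hs2, mul_pos hc1 hc2]
  · nlinarith [habs]


/-- Two disjoint closed circular discs on the unit sphere in `ℝ³`, each of
radius less than `π/2`, can be separated by a great circle: they lie in the
two distinct closed hemispheres it determines. -/
theorem sphere_discs_separated_by_great_circle
    (O1 O2 : EuclideanSpace ℝ (Fin 3)) (r1 r2 : ℝ)
    (hO1 : ‖O1‖ = 1) (hO2 : ‖O2‖ = 1)
    (hr1 : r1 ∈ Set.Ioo 0 (Real.pi / 2)) (hr2 : r2 ∈ Set.Ioo 0 (Real.pi / 2))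
    (hdisj : Disjoint
      {X : EuclideanSpace ℝ (Fin 3) | ‖X‖ = 1 ∧ Real.arccos ⟪X, O1⟫ ≤ r1}
      {X : EuclideanSpace ℝ (Fin 3) | ‖X‖ = 1 ∧ Real.arccos ⟪X, O2⟫ ≤ r2}) :
    ∃ v : EuclideanSpace ℝ (Fin 3), v ≠ 0 ∧
      (∀ X : EuclideanSpace ℝ (Fin 3),
        ‖X‖ = 1 → Real.arccos ⟪X, O1⟫ ≤ r1 → 0 ≤ ⟪v, X⟫) ∧
      (∀ X : EuclideanSpace ℝ (Fin 3),
        ‖X‖ = 1 → Real.arccos ⟪X, O2⟫ ≤ r2 → ⟪v, X⟫ ≤ 0) := by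
  obtain ⟨hr10, hr1π⟩ := hr1
  obtain ⟨hr20, hr2π⟩ := hr2
  have hπ := Real.pi_pos
  set c : ℝ := ⟪O1, O2⟫ with hc_def
  have hcs : |c| ≤ 1 := by
    have := abs_real_inner_le_norm O1 O2; rwa [hO1, hO2, one_mul] at this
  have hc_le1 : c ≤ 1 := (abs_le.mp hcs).2
  have hc_gem1 : -1 ≤ c := (abs_le.mp hcs).1
  have hO11 : ⟪O1, O1⟫ = (1:ℝ) := by rw [real_inner_self_eq_norm_sq, hO1]; norm_num
  have hO22 : ⟪O2, O2⟫ = (1:ℝ) := by rw [real_inner_self_eq_norm_sq, hO2]; norm_num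
  have hO21 : ⟪O2, O1⟫ = c := real_inner_comm O1 O2
  -- Step 1 : `c ≤ cos (r1 + r2)` since the discs are disjoint
  have hstep1 : c ≤ Real.cos (r1 + r2) := by
    by_contra hlt
    push_neg at hlt
    rcases le_or_gt (Real.cos r1) c with h1 | h1
    · have hm1 : O2 ∈ {X : EuclideanSpace ℝ (Fin 3) | ‖X‖ = 1 ∧ Real.arccos ⟪X, O1⟫ ≤ r1} := by
        refine ⟨hO2, ?_⟩
        rw [hO21]
        calc Real.arccos c ≤ Real.arccos (Real.cos r1) := arccos_le_arccos' h1
          _ = r1 := Real.arccos_cos hr10.le (by linarith)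
      have hm2 : O2 ∈ {X : EuclideanSpace ℝ (Fin 3) | ‖X‖ = 1 ∧ Real.arccos ⟪X, O2⟫ ≤ r2} := by
        refine ⟨hO2, ?_⟩
        rw [hO22, Real.arccos_one]; linarith
      exact Set.disjoint_left.mp hdisj hm1 hm2
    rcases le_or_gt (Real.cos r2) c with h2 | h2
    · have hm1 : O1 ∈ {X : EuclideanSpace ℝ (Fin 3) | ‖X‖ = 1 ∧ Real.arccos ⟪X, O1⟫ ≤ r1} := by
        refine ⟨hO1, ?_⟩
        rw [hO11, Real.arccos_one]; linarith
      have hm2 : O1 ∈ {X : EuclideanSpace ℝ (Fin 3) | ‖X‖ = 1 ∧ Real.arccos ⟪X, O2⟫ ≤ r2} := by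
        refine ⟨hO1, ?_⟩
        rw [← hc_def]
        calc Real.arccos c ≤ Real.arccos (Real.cos r2) := arccos_le_arccos' h2
          _ = r2 := Real.arccos_cos hr20.le (by linarith)
      exact Set.disjoint_left.mp hdisj hm1 hm2
    · set θ := Real.arccos c with hθ_def
      have hcosθ : Real.cos θ = c := Real.cos_arccos hc_gem1 hc_le1
      have hθ_lt : θ < r1 + r2 := by
        have h3 := Real.strictAntiOn_arccos (Set.mem_Icc.mpr
            ⟨Real.neg_one_le_cos _, Real.cos_le_one _⟩)
          (Set.mem_Icc.mpr ⟨hc_gem1, hc_le1⟩) hlt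
        rwa [Real.arccos_cos (by linarith) (by linarith)] at h3
      have hθ_gt1 : r1 < θ := by
        have h3 := Real.strictAntiOn_arccos (Set.mem_Icc.mpr ⟨hc_gem1, hc_le1⟩)
          (Set.mem_Icc.mpr ⟨Real.neg_one_le_cos _, Real.cos_le_one _⟩) h1
        rwa [Real.arccos_cos hr10.le (by linarith)] at h3
      have hsθ : 0 < Real.sin θ :=
        Real.sin_pos_of_pos_of_lt_pi (by linarith) (by linarith)
      set s := Real.sin θ with hs_def
      have hs2 : s ^ 2 = 1 - c ^ 2 := by
        have := Real.sin_sq_add_cos_sq θ; rw [hcosθ] at this; linarith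
      set a : ℝ := (s * Real.cos r1 - c * Real.sin r1) / s with ha_def
      set b : ℝ := Real.sin r1 / s with hb_def
      set X := a • O1 + b • O2 with hX_def
      have hip1 : ⟪X, O1⟫ = Real.cos r1 := by
        simp only [hX_def, inner_add_left, real_inner_smul_left, hO11, hO21]
        rw [ha_def, hb_def]
        field_simp [hsθ.ne']
        ring
      have hip2 : ⟪X, O2⟫ = Real.cos (θ - r1) := by
        simp only [hX_def, inner_add_left, real_inner_smul_left, ← hc_def, hO22]
        rw [Real.cos_sub, hcosθ, ← hs_def]
        rw [ha_def, hb_def]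
        field_simp [hsθ.ne']
        linear_combination (-(Real.sin r1)) * hs2
      have hXX : ⟪X, X⟫ = (1:ℝ) := by
        simp only [hX_def, inner_add_left, inner_add_right, real_inner_smul_left,
          real_inner_smul_right, hO11, hO22, hO21, ← hc_def]
        rw [ha_def, hb_def]
        field_simp [hsθ.ne']
        linear_combination (s ^ 2) * Real.sin_sq_add_cos_sq r1 - (Real.sin r1 ^ 2) * hs2
      have hXnorm : ‖X‖ = 1 := by
        have h4 : ‖X‖ ^ 2 = 1 := by rw [← real_inner_self_eq_norm_sq, hXX]
        have h5 : (‖X‖ - 1) * (‖X‖ + 1) = 0 := by nlinarith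
        rcases mul_eq_zero.mp h5 with h6 | h6
        · linarith
        · linarith [norm_nonneg X]
      have hm1 : X ∈ {Y : EuclideanSpace ℝ (Fin 3) | ‖Y‖ = 1 ∧ Real.arccos ⟪Y, O1⟫ ≤ r1} := by
        refine ⟨hXnorm, ?_⟩
        rw [hip1, Real.arccos_cos hr10.le (by linarith)]
      have hm2 : X ∈ {Y : EuclideanSpace ℝ (Fin 3) | ‖Y‖ = 1 ∧ Real.arccos ⟪Y, O2⟫ ≤ r2} := by
        refine ⟨hXnorm, ?_⟩
        rw [hip2, Real.arccos_cos (by linarith) (by linarith)]; linarith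
      exact Set.disjoint_left.mp hdisj hm1 hm2
  -- Step 2 : construct the separating normal vector
  set s1 := Real.sin r1 with hs1_def
  set s2 := Real.sin r2 with hs2_def
  set c1 := Real.cos r1 with hc1_def
  set c2 := Real.cos r2 with hc2_def
  have hs1pos : 0 < s1 := Real.sin_pos_of_pos_of_lt_pi hr10 (by linarith)
  have hs2pos : 0 < s2 := Real.sin_pos_of_pos_of_lt_pi hr20 (by linarith)
  have hc1pos : 0 < c1 := Real.cos_pos_of_mem_Ioo ⟨by linarith, hr1π⟩
  have hc2pos : 0 < c2 := Real.cos_pos_of_mem_Ioo ⟨by linarith, hr2π⟩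
  have hsc1 : s1 ^ 2 + c1 ^ 2 = 1 := Real.sin_sq_add_cos_sq r1
  have hsc2 : s2 ^ 2 + c2 ^ 2 = 1 := Real.sin_sq_add_cos_sq r2
  have hcosadd : Real.cos (r1 + r2) = c1 * c2 - s1 * s2 := Real.cos_add r1 r2
  obtain ⟨v, hv, hv1, hv2⟩ : ∃ v : EuclideanSpace ℝ (Fin 3),
      ‖v‖ = 1 ∧ s1 ≤ ⟪v, O1⟫ ∧ s2 ≤ ⟪-v, O2⟫ := by
    rcases lt_or_ge (-(c1 * c2 + s1 * s2)) c with hA | hB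
    · -- main case : take the vector in the plane of `O1, O2`
      have hcub : c + s1 * s2 ≤ c1 * c2 := by
        rw [hcosadd] at hstep1; linarith
      obtain ⟨hc2lt, hkey⟩ := aux_caseA hsc1 hsc2 hs1pos hs2pos hc1pos hc2pos hA hcub
      set w := (s1 + c * s2) • O1 - (s2 + c * s1) • O2 with hw_def
      have hwO1 : ⟪w, O1⟫ = s1 * (1 - c ^ 2) := by
        simp only [hw_def, inner_sub_left, real_inner_smul_left, hO11, hO21]
        ring
      have hwO2 : ⟪w, O2⟫ = -(s2 * (1 - c ^ 2)) := by
        simp only [hw_def, inner_sub_left, real_inner_smul_left, hO22, ← hc_def]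
        ring
      have hww : ⟪w, w⟫ = (1 - c ^ 2) * (s1 ^ 2 + s2 ^ 2 + 2 * c * s1 * s2) := by
        simp only [hw_def, inner_sub_left, inner_sub_right, real_inner_smul_left,
          real_inner_smul_right, hO11, hO22, hO21, ← hc_def]
        ring
      have hwnormsq : ‖w‖ ^ 2 = (1 - c ^ 2) * (s1 ^ 2 + s2 ^ 2 + 2 * c * s1 * s2) := by
        rw [← real_inner_self_eq_norm_sq, hww]
      have hwle : ‖w‖ ^ 2 ≤ (1 - c ^ 2) ^ 2 := by
        rw [hwnormsq]
        calc (1 - c ^ 2) * (s1 ^ 2 + s2 ^ 2 + 2 * c * s1 * s2)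
            ≤ (1 - c ^ 2) * (1 - c ^ 2) :=
              mul_le_mul_of_nonneg_left hkey (by nlinarith)
          _ = (1 - c ^ 2) ^ 2 := by ring
      have hprod : 0 < s1 * (1 - c ^ 2) := mul_pos hs1pos (by nlinarith)
      have hw0 : w ≠ 0 := by
        intro h0
        rw [h0, inner_zero_left] at hwO1
        linarith
      have hwpos : 0 < ‖w‖ := norm_pos_iff.mpr hw0
      have hwle' : ‖w‖ ≤ 1 - c ^ 2 :=
        (pow_le_pow_iff_left₀ (norm_nonneg w) (by nlinarith) two_ne_zero).mp hwle
      refine ⟨‖w‖⁻¹ • w, norm_smul_inv_norm hw0, ?_, ?_⟩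
      · rw [real_inner_smul_left, hwO1]
        calc s1 = ‖w‖⁻¹ * (s1 * ‖w‖) := by field_simp
          _ ≤ ‖w‖⁻¹ * (s1 * (1 - c ^ 2)) :=
            mul_le_mul_of_nonneg_left
              (mul_le_mul_of_nonneg_left hwle' hs1pos.le) (inv_nonneg.mpr hwpos.le)
      · rw [inner_neg_left, real_inner_smul_left, hwO2, mul_neg, neg_neg]
        calc s2 = ‖w‖⁻¹ * (s2 * ‖w‖) := by field_simp
          _ ≤ ‖w‖⁻¹ * (s2 * (1 - c ^ 2)) :=
            mul_le_mul_of_nonneg_left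
              (mul_le_mul_of_nonneg_left hwle' hs2pos.le) (inv_nonneg.mpr hwpos.le)
    · -- degenerate case : the centers are nearly antipodal
      rcases le_total r2 r1 with hr | hr
      · refine ⟨O1, hO1, by rw [hO11]; exact Real.sin_le_one r1, ?_⟩
        rw [inner_neg_left, ← hc_def]
        have h7 : s2 ≤ c1 * c2 + s1 * s2 := by
          have h8 : Real.cos (r1 - r2) = c1 * c2 + s1 * s2 := Real.cos_sub r1 r2
          have h9 : Real.cos (Real.pi / 2 - r2) ≤ Real.cos (r1 - r2) :=
            Real.cos_le_cos_of_nonneg_of_le_pi (by linarith) (by linarith) (by linarith)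
          rw [Real.cos_pi_div_two_sub] at h9
          linarith
        linarith
      · refine ⟨-O2, by rw [norm_neg, hO2], ?_, ?_⟩
        · rw [inner_neg_left, hO21]
          have h7 : s1 ≤ c1 * c2 + s1 * s2 := by
            have h8 : Real.cos (r2 - r1) = c2 * c1 + s2 * s1 := Real.cos_sub r2 r1
            have h9 : Real.cos (Real.pi / 2 - r1) ≤ Real.cos (r2 - r1) :=
              Real.cos_le_cos_of_nonneg_of_le_pi (by linarith) (by linarith) (by linarith)
            rw [Real.cos_pi_div_two_sub] at h9
            linarith
          linarith
        · rw [neg_neg, hO22]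
          exact Real.sin_le_one r2
  refine ⟨v, fun h0 => by rw [h0, norm_zero] at hv; norm_num at hv, ?_, ?_⟩
  · exact half_lemma v O1 r1 hv hO1 hr10 hr1π hv1
  · intro X hX harc
    have h10 := half_lemma (-v) O2 r2 (by rw [norm_neg, hv]) hO2 hr20 hr2π hv2 X hX harc
    rw [inner_neg_left] at h10
    linarith
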